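/- Let B be a finite-dimensional algebra over a field k and let e, f ∈ B be idempotents. Let (Bf)* = Hom_k(Bf, k), regarded as a right B-module via (φ·b)(x) = φ(bx). Then the endofunctor Be ⊗_k (Bf)* ⊗_B − of the category of left B-modules is left adjoint to the endofunctor Bf ⊗_k eB ⊗_B −. -/

import Mathlib

open CategoryTheory

section Defs

variable {k : Type} [Field k] (B : Type) [Ring B] [Algebra k B]

/-- Right multiplication by `b` as an endomorphism of the left regular module `B`. -/
def rmulB (b : B) : B →ₗ[B] B where
  toFun x := x * b
  map_add' x y := add_mul x y b
  map_smul' c x := by simp [smul_eq_mul, mul_assoc]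

/-- Left multiplication by `b` as an endomorphism of the right regular module `B`. -/
def lmulB (b : B) : B →ₗ[Bᵐᵒᵖ] B where
  toFun x := b * x
  map_add' x y := mul_add b x y
  map_smul' c x := by simp [MulOpposite.smul_eq_mul_unop, mul_assoc]

/-- The left ideal `B·x` as a left `B`-submodule of `B`; for an idempotent `e`, `Bdot B e`
is the left module `Be`. -/
noncomputable def Bdot (x : B) : Submodule B B := LinearMap.range (rmulB B x)

/-- The right ideal `x·B` as a right `B`-submodule of `B`; for an idempotent `e`, `dotB B e`
is the right module `eB`. -/
noncomputable def dotB (x : B) : Submodule Bᵐᵒᵖ B := LinearMap.range (lmulB B x)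

variable {B}

/-- Left multiplication by `b : B` on the left module `Bf`, as a `k`-linear map. -/
noncomputable def smulMap (f : B) (b : B) : (Bdot B f) →ₗ[k] (Bdot B f) where
  toFun y := b • y
  map_add' x y := smul_add b x y
  map_smul' c y := (smul_comm c b y).symm

end Defs

/-! ### Auxiliary machinery -/

section CModule

variable (B : Type) [Ring B]

/-- The "co-induced" character module `Hom_ℤ(B, ℚ/ℤ)`: a `Type 0` cogenerator for
left `B`-modules in every universe. -/
def CMod : Type := B →+ AddCircle (1 : ℚ)

instance : AddCommGroup (CMod B) := inferInstanceAs (AddCommGroup (B →+ _))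

instance : FunLike (CMod B) B (AddCircle (1 : ℚ)) :=
  inferInstanceAs (FunLike (B →+ AddCircle (1 : ℚ)) _ _)

instance : AddMonoidHomClass (CMod B) B (AddCircle (1 : ℚ)) :=
  inferInstanceAs (AddMonoidHomClass (B →+ AddCircle (1 : ℚ)) _ _)

instance : Module B (CMod B) where
  smul b ψ := (ψ : B →+ AddCircle (1 : ℚ)).comp (AddMonoidHom.mulRight b)
  one_smul ψ := AddMonoidHom.ext fun x => by show ψ (x * 1) = ψ x; rw [mul_one]
  mul_smul b b' ψ := AddMonoidHom.ext fun x => by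
    show ψ (x * (b * b')) = ψ (x * b * b'); rw [mul_assoc]
  smul_zero b := rfl
  smul_add b ψ ψ' := rfl
  add_smul b b' ψ := AddMonoidHom.ext fun x => by
    show ψ (x * (b + b')) = ψ (x * b) + ψ (x * b'); rw [mul_add, map_add]
  zero_smul ψ := AddMonoidHom.ext fun x => by
    show ψ (x * 0) = 0; rw [mul_zero, map_zero]

variable {B}

lemma CMod.smul_apply (b : B) (ψ : CMod B) (x : B) : (b • ψ) x = ψ (x * b) := rfl

lemma CMod.zero_apply (x : B) : (0 : CMod B) x = 0 := rfl

lemma CMod.separate {N : Type*} [AddCommGroup N] [Module B N] {n : N} (hn : n ≠ 0) :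
    ∃ h : N →ₗ[B] CMod B, h n ≠ 0 := by
  obtain ⟨χ, hχ⟩ := CharacterModule.exists_character_apply_ne_zero_of_ne_zero hn
  let hmap : N →ₗ[B] CMod B :=
  { toFun := fun n' => AddMonoidHom.mk' (fun x => χ (x • n'))
      (fun x y => by show χ ((x + y) • n') = χ (x • n') + χ (y • n'); rw [add_smul, map_add])
    map_add' := fun a b => AddMonoidHom.ext fun x => by
      show χ (x • (a + b)) = χ (x • a) + χ (x • b); rw [smul_add, map_add]
    map_smul' := fun b a => AddMonoidHom.ext fun x => by
      show χ (x • b • a) = χ ((x * b) • a); rw [mul_smul] }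
  refine ⟨hmap, fun h0 => hχ ?_⟩
  have h2 : hmap n 1 = χ n := by show χ ((1 : B) • n) = χ n; rw [one_smul]
  rw [h0] at h2
  exact h2.symm.trans rfl

lemma CMod.eq_of_forall {N : Type*} [AddCommGroup N] [Module B N] {a b : N}
    (h : ∀ g : N →ₗ[B] CMod B, g a = g b) : a = b := by
  by_contra hne
  obtain ⟨g, hg⟩ := CMod.separate (B := B) (sub_ne_zero.2 hne)
  exact hg (by rw [map_sub, h g, sub_self])

lemma span_eq_top_of_cmod {X : Type*} [AddCommGroup X] [Module B X] (s : Set X)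
    (huniq : ∀ g : X →ₗ[B] CMod B, (∀ z ∈ s, g z = 0) → g = 0) :
    Submodule.span B s = ⊤ := by
  rw [Submodule.eq_top_iff']
  intro ξ
  by_contra hξ
  have h0 : (Submodule.span B s).mkQ ξ ≠ 0 := by
    simpa [Submodule.mkQ_apply, Submodule.Quotient.mk_eq_zero] using hξ
  obtain ⟨h, hh⟩ := CMod.separate (B := B) h0
  have hcomp : h ∘ₗ (Submodule.span B s).mkQ = 0 := by
    refine huniq _ fun z hz => ?_
    simp [Submodule.mkQ_apply, (Submodule.Quotient.mk_eq_zero _).2 (Submodule.subset_span hz)]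
  exact hh (by simpa using congrArg (fun (g : X →ₗ[B] CMod B) => g ξ) hcomp)

end CModule

section TwistDef

variable (k : Type) [Field k] (B : Type) [Ring B] [Algebra k B] (e f : B)
variable (C : Type) [AddCommGroup C]

/-- The biadditive maps `(Bf)* → Be → C`, as a `B`-module with the action twisted through
precomposition with `b • -` on `(Bf)*`. -/
noncomputable def Twist : Type := ((Bdot B f) →ₗ[k] k) →+ ((Bdot B e) →+ C)

noncomputable instance : AddCommGroup (Twist k B e f C) :=
  inferInstanceAs (AddCommGroup (_ →+ _))

noncomputable instance : FunLike (Twist k B e f C) ((Bdot B f) →ₗ[k] k) ((Bdot B e) →+ C) :=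
  inferInstanceAs (FunLike (((Bdot B f) →ₗ[k] k) →+ ((Bdot B e) →+ C)) _ _)

noncomputable instance :
    AddMonoidHomClass (Twist k B e f C) ((Bdot B f) →ₗ[k] k) ((Bdot B e) →+ C) :=
  inferInstanceAs (AddMonoidHomClass (((Bdot B f) →ₗ[k] k) →+ ((Bdot B e) →+ C)) _ _)

variable {k B e f C}

lemma smulMap_apply (b : B) (y : Bdot B f) : smulMap (k := k) f b y = b • y := rfl

lemma smulMap_one : smulMap (k := k) f (1 : B) = LinearMap.id :=
  LinearMap.ext fun y => one_smul _ y

lemma smulMap_mul (b b' : B) :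
    (smulMap (k := k) f b) ∘ₗ (smulMap (k := k) f b') = smulMap (k := k) f (b * b') :=
  LinearMap.ext fun y => (mul_smul b b' y).symm

lemma smulMap_add (b b' : B) :
    smulMap (k := k) f (b + b') = smulMap (k := k) f b + smulMap (k := k) f b' :=
  LinearMap.ext fun y => add_smul b b' y

lemma smulMap_zero : smulMap (k := k) f (0 : B) = 0 :=
  LinearMap.ext fun y => zero_smul B y

noncomputable instance : Module B (Twist k B e f C) where
  smul b H := AddMonoidHom.mk' (fun φ => H (φ ∘ₗ smulMap f b))
    (fun φ φ' => by
      show H ((φ + φ') ∘ₗ smulMap f b) = H (φ ∘ₗ smulMap f b) + H (φ' ∘ₗ smulMap f b)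
      rw [LinearMap.add_comp, map_add])
  one_smul H := AddMonoidHom.ext fun φ => by
    show H (φ ∘ₗ smulMap f 1) = H φ
    rw [smulMap_one, LinearMap.comp_id]
  mul_smul b b' H := AddMonoidHom.ext fun φ => by
    show H (φ ∘ₗ smulMap f (b * b')) = H ((φ ∘ₗ smulMap f b) ∘ₗ smulMap f b')
    rw [LinearMap.comp_assoc, smulMap_mul]
  smul_zero b := AddMonoidHom.ext fun φ => rfl
  smul_add b H H' := AddMonoidHom.ext fun φ => rfl
  add_smul b b' H := AddMonoidHom.ext fun φ => by
    show H (φ ∘ₗ smulMap f (b + b')) = H (φ ∘ₗ smulMap f b) + H (φ ∘ₗ smulMap f b')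
    rw [smulMap_add, LinearMap.comp_add, map_add]
  zero_smul H := AddMonoidHom.ext fun φ => by
    show H (φ ∘ₗ smulMap f 0) = 0
    rw [smulMap_zero, LinearMap.comp_zero, map_zero]

lemma Twist.smul_def (b : B) (H : Twist k B e f C) (φ : (Bdot B f) →ₗ[k] k) :
    (b • H) φ = H (φ ∘ₗ smulMap f b) := rfl

lemma Twist.smul_apply (b : B) (H : Twist k B e f C) (φ : (Bdot B f) →ₗ[k] k)
    (x : Bdot B e) : (b • H) φ x = H (φ ∘ₗ smulMap f b) x := rfl

lemma Twist.add_apply (H H' : Twist k B e f C) (φ : (Bdot B f) →ₗ[k] k) (x : Bdot B e) :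
    (H + H') φ x = H φ x + H' φ x := rfl

lemma Twist.zero_apply (φ : (Bdot B f) →ₗ[k] k) (x : Bdot B e) :
    (0 : Twist k B e f C) φ x = 0 := rfl

lemma Twist.ext {H H' : Twist k B e f C} (h : ∀ φ x, H φ x = H' φ x) : H = H' :=
  AddMonoidHom.ext fun φ => AddMonoidHom.ext fun x => h φ x

/-- Evaluation of a `Twist` at a pair of points, as an additive map. -/
noncomputable def Twist.eval (φ : (Bdot B f) →ₗ[k] k) (x : Bdot B e) :
    Twist k B e f C →+ C :=
  AddMonoidHom.mk' (fun H => H φ x) (fun _ _ => rfl)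

lemma Twist.sum_apply {ι : Type*} (s : Finset ι) (H : ι → Twist k B e f C)
    (φ : (Bdot B f) →ₗ[k] k) (x : Bdot B e) :
    (∑ i ∈ s, H i) φ x = ∑ i ∈ s, H i φ x :=
  map_sum (Twist.eval φ x) H s

end TwistDef

section BasisLemmas

variable {k : Type} [Field k] {B : Type} [Ring B] [Algebra k B] {f : B}
variable {ι : Type} [Fintype ι] (v : Module.Basis ι k (Bdot B f))

lemma dual_sum (φ : (Bdot B f) →ₗ[k] k) : (∑ i, φ (v i) • v.coord i) = φ := by
  refine v.ext fun j => ?_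
  classical
  rw [LinearMap.sum_apply]
  simp [Module.Basis.coord_apply, Finsupp.single_apply, mul_ite, mul_one, mul_zero]

lemma coord_comp_smulMap (b : B) (j : ι) :
    (∑ i, v.coord j (b • v i) • v.coord i) = v.coord j ∘ₗ smulMap f b := by
  refine v.ext fun l => ?_
  classical
  rw [LinearMap.sum_apply, LinearMap.comp_apply]
  simp [smulMap_apply, Module.Basis.coord_apply, Finsupp.single_apply, mul_ite, mul_one, mul_zero]

lemma sum_swap_basis {A : Type*} [AddCommGroup A]
    (T : (Bdot B f) → ((Bdot B f) →ₗ[k] k) → A)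
    (T1 : ∀ x x' φ, T (x + x') φ = T x φ + T x' φ)
    (T2 : ∀ x φ φ', T x (φ + φ') = T x φ + T x φ')
    (Tb : ∀ (c : k) x φ, T (c • x) φ = T x (c • φ)) (b : B) :
    (∑ i, T (b • v i) (v.coord i)) = ∑ i, T (v i) (v.coord i ∘ₗ smulMap f b) := by
  have hT1 : ∀ (φ : (Bdot B f) →ₗ[k] k) (s : Finset ι) (g : ι → Bdot B f),
      T (∑ i ∈ s, g i) φ = ∑ i ∈ s, T (g i) φ := fun φ s g =>
    map_sum (AddMonoidHom.mk' (fun x => T x φ) (fun a b => T1 a b φ)) g s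
  have hT2 : ∀ (x : Bdot B f) (s : Finset ι) (g : ι → ((Bdot B f) →ₗ[k] k)),
      T x (∑ i ∈ s, g i) = ∑ i ∈ s, T x (g i) := fun x s g =>
    map_sum (AddMonoidHom.mk' (fun φ => T x φ) (fun a b => T2 x a b)) g s
  calc (∑ i, T (b • v i) (v.coord i))
      = ∑ i, T (∑ j, v.coord j (b • v i) • v j) (v.coord i) := by
        refine Finset.sum_congr rfl fun i _ => ?_
        congr 1
        have := v.sum_repr (b • v i)
        simpa [Module.Basis.coord_apply] using this.symm
    _ = ∑ i, ∑ j, T (v.coord j (b • v i) • v j) (v.coord i) :=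
        Finset.sum_congr rfl fun i _ => hT1 _ _ _
    _ = ∑ i, ∑ j, T (v j) (v.coord j (b • v i) • v.coord i) :=
        Finset.sum_congr rfl fun i _ => Finset.sum_congr rfl fun j _ => Tb _ _ _
    _ = ∑ j, ∑ i, T (v j) (v.coord j (b • v i) • v.coord i) := Finset.sum_comm
    _ = ∑ j, T (v j) (∑ i, v.coord j (b • v i) • v.coord i) :=
        Finset.sum_congr rfl fun j _ => (hT2 _ _ _).symm
    _ = ∑ j, T (v j) (v.coord j ∘ₗ smulMap f b) :=
        Finset.sum_congr rfl fun j _ => by rw [coord_comp_smulMap]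

end BasisLemmas

section TwistOf

variable {k : Type} [Field k] {B : Type} [Ring B] [Algebra k B] {e f : B}
variable {N : Type*} [AddCommGroup N] [Module B N]

/-- The universal bi-additive map underlying `x ⊗ φ ⊗ ξ ↦ φ(u)·x·y·n`. -/
noncomputable def twistOf (h : N →ₗ[B] CMod B) (u : Bdot B f) (y : dotB B e) (n : N) :
    Twist k B e f (CMod B) :=
  AddMonoidHom.mk'
    (fun φ => AddMonoidHom.mk'
      (fun x => h ((algebraMap k B (φ u) * ((x : B) * (y : B))) • n))
      (fun x x' => by
        show h ((algebraMap k B (φ u) * (((x : B) + (x' : B)) * (y : B))) • n) = _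
        rw [add_mul, mul_add, add_smul, map_add]))
    (fun φ φ' => AddMonoidHom.ext fun x => by
      show h ((algebraMap k B (φ u + φ' u) * ((x : B) * (y : B))) • n) = _
      rw [map_add, add_mul, add_smul, map_add]
      rfl)

lemma twistOf_apply (h : N →ₗ[B] CMod B) (u : Bdot B f) (y : dotB B e) (n : N)
    (φ : (Bdot B f) →ₗ[k] k) (x : Bdot B e) :
    twistOf h u y n φ x = h ((algebraMap k B (φ u) * ((x : B) * (y : B))) • n) := rfl

end TwistOf

set_option maxHeartbeats 3200000 in
/-- let `B` be a finite-dimensional `k`-algebra and `e, f ∈ B` idempotents.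
Then the endofunctor `Be ⊗_k (Bf)* ⊗_B −` of the category of left `B`-modules is left
adjoint to the endofunctor `Bf ⊗_k eB ⊗_B −`, where `(Bf)* = Hom_k(Bf, k)` carries the
right `B`-action `(φ · b)(x) = φ(bx)`.

The two endofunctors are formalized as functors `F`, `G` on `ModuleCat B` equipped, for each
module `M`, with a universal triadditive map: for `F` a map
`θ : Be → (Bf)* → M → F.obj M` which is additive in each variable, `k`-balanced in the
first two variables, `B`-balanced in the last two variables (relative to the right action
`(φ · b) = φ ∘ (b • −)` of `B` on `(Bf)*`), left `B`-equivariant in the first variable,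
universal among such maps, and natural in `M`; and for `G` the analogous data on
`Bf × eB × M`. This characterizes `F ≅ (Be ⊗_k (Bf)*) ⊗_B −` and
`G ≅ (Bf ⊗_k eB) ⊗_B −` uniquely up to natural isomorphism. -/
theorem stmt_12 {k : Type} [Field k] (B : Type) [Ring B] [Algebra k B]
    [FiniteDimensional k B]
    (e f : B) (he : e * e = e) (hf : f * f = f)
    -- the functor `Be ⊗_k (Bf)* ⊗_B −`
    (F : ModuleCat B ⥤ ModuleCat B)
    (θ : ∀ M : ModuleCat B, (Bdot B e) → ((Bdot B f) →ₗ[k] k) → M → F.obj M)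
    (hθ1 : ∀ (M : ModuleCat B) (x x' : Bdot B e) (φ : (Bdot B f) →ₗ[k] k) (m : M),
      θ M (x + x') φ m = θ M x φ m + θ M x' φ m)
    (hθ2 : ∀ (M : ModuleCat B) (x : Bdot B e) (φ φ' : (Bdot B f) →ₗ[k] k) (m : M),
      θ M x (φ + φ') m = θ M x φ m + θ M x φ' m)
    (hθ3 : ∀ (M : ModuleCat B) (x : Bdot B e) (φ : (Bdot B f) →ₗ[k] k) (m m' : M),
      θ M x φ (m + m') = θ M x φ m + θ M x φ m')
    (hθk : ∀ (M : ModuleCat B) (c : k) (x : Bdot B e) (φ : (Bdot B f) →ₗ[k] k) (m : M),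
      θ M (c • x) φ m = θ M x (c • φ) m)
    (hθbal : ∀ (M : ModuleCat B) (b : B) (x : Bdot B e) (φ : (Bdot B f) →ₗ[k] k) (m : M),
      θ M x (φ ∘ₗ smulMap f b) m = θ M x φ (b • m))
    (hθleft : ∀ (M : ModuleCat B) (b : B) (x : Bdot B e) (φ : (Bdot B f) →ₗ[k] k) (m : M),
      θ M (b • x) φ m = b • θ M x φ m)
    (hθuniv : ∀ (M : ModuleCat B) (P : Type) [AddCommGroup P] [Module B P]
      (β : (Bdot B e) → ((Bdot B f) →ₗ[k] k) → M → P),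
      (∀ x x' φ m, β (x + x') φ m = β x φ m + β x' φ m) →
      (∀ x φ φ' m, β x (φ + φ') m = β x φ m + β x φ' m) →
      (∀ x φ m m', β x φ (m + m') = β x φ m + β x φ m') →
      (∀ (c : k) x φ m, β (c • x) φ m = β x (c • φ) m) →
      (∀ (b : B) x φ m, β x (φ ∘ₗ smulMap f b) m = β x φ (b • m)) →
      (∀ (b : B) x φ m, β (b • x) φ m = b • β x φ m) →
      ∃! g : F.obj M →ₗ[B] P, ∀ x φ m, g (θ M x φ m) = β x φ m)
    (hθnat : ∀ (M M' : ModuleCat B) (ψ : M ⟶ M') (x : Bdot B e)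
      (φ : (Bdot B f) →ₗ[k] k) (m : M),
      F.map ψ (θ M x φ m) = θ M' x φ (ψ m))
    -- the functor `Bf ⊗_k eB ⊗_B −`
    (G : ModuleCat B ⥤ ModuleCat B)
    (θ' : ∀ M : ModuleCat B, (Bdot B f) → (dotB B e) → M → G.obj M)
    (hθ'1 : ∀ (M : ModuleCat B) (x x' : Bdot B f) (y : dotB B e) (m : M),
      θ' M (x + x') y m = θ' M x y m + θ' M x' y m)
    (hθ'2 : ∀ (M : ModuleCat B) (x : Bdot B f) (y y' : dotB B e) (m : M),
      θ' M x (y + y') m = θ' M x y m + θ' M x y' m)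
    (hθ'3 : ∀ (M : ModuleCat B) (x : Bdot B f) (y : dotB B e) (m m' : M),
      θ' M x y (m + m') = θ' M x y m + θ' M x y m')
    (hθ'k : ∀ (M : ModuleCat B) (c : k) (x : Bdot B f) (y : dotB B e) (m : M),
      θ' M (c • x) y m = θ' M x (c • y) m)
    (hθ'bal : ∀ (M : ModuleCat B) (b : B) (x : Bdot B f) (y : dotB B e) (m : M),
      θ' M x (MulOpposite.op b • y) m = θ' M x y (b • m))
    (hθ'left : ∀ (M : ModuleCat B) (b : B) (x : Bdot B f) (y : dotB B e) (m : M),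
      θ' M (b • x) y m = b • θ' M x y m)
    (hθ'univ : ∀ (M : ModuleCat B) (P : Type) [AddCommGroup P] [Module B P]
      (β : (Bdot B f) → (dotB B e) → M → P),
      (∀ x x' y m, β (x + x') y m = β x y m + β x' y m) →
      (∀ x y y' m, β x (y + y') m = β x y m + β x y' m) →
      (∀ x y m m', β x y (m + m') = β x y m + β x y m') →
      (∀ (c : k) x y m, β (c • x) y m = β x (c • y) m) →
      (∀ (b : B) x y m, β x (MulOpposite.op b • y) m = β x y (b • m)) →
      (∀ (b : B) x y m, β (b • x) y m = b • β x y m) →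
      ∃! g : G.obj M →ₗ[B] P, ∀ x y m, g (θ' M x y m) = β x y m)
    (hθ'nat : ∀ (M M' : ModuleCat B) (ψ : M ⟶ M') (x : Bdot B f) (y : dotB B e) (m : M),
      G.map ψ (θ' M x y m) = θ' M' x y (ψ m)) :
    Nonempty (F ⊣ G) := by
  
  classical
  haveI hfd : FiniteDimensional k (Bdot B f) :=
    FiniteDimensional.of_injective (((Bdot B f).subtype).restrictScalars k)
      (Submodule.injective_subtype _)
  let v : Module.Basis (Fin (Module.finrank k (Bdot B f))) k (Bdot B f) :=
    Module.finBasis k (Bdot B f)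
  let eE : Bdot B e := ⟨e, ⟨e, he⟩⟩
  let eR : dotB B e := ⟨e, ⟨e, he⟩⟩
  have heEval : (eE : B) = e := rfl
  have heRval : (eR : B) = e := rfl
  have hBe : ∀ x : Bdot B e, (x : B) * e = (x : B) := by
    rintro ⟨x, a, rfl⟩
    show a * e * e = a * e
    rw [mul_assoc, he]
  have heB : ∀ y : dotB B e, e * (y : B) = (y : B) := by
    rintro ⟨y, a, rfl⟩
    show e * (e * a) = e * a
    rw [← mul_assoc, he]
  have hcentral : ∀ (c : k) (z w : B),
      z * (algebraMap k B c * w) = algebraMap k B c * (z * w) :=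
    fun c z w => by rw [← mul_assoc, ← Algebra.commutes c z, mul_assoc]
  have hksm : ∀ (c : k) (x : Bdot B e), c • x = (algebraMap k B c) • x :=
    fun c x => Subtype.ext (Algebra.smul_def c (x : B))
  have hkdot : ∀ (c : k) (y : dotB B e), c • y = (MulOpposite.op (algebraMap k B c)) • y :=
    fun c y => Subtype.ext (by
      show c • (y : B) = MulOpposite.op (algebraMap k B c) • (y : B)
      rw [MulOpposite.smul_eq_mul_unop, MulOpposite.unop_op, Algebra.smul_def,
        Algebra.commutes])
  have hop : ∀ (b : B) (y : dotB B e),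
      ((MulOpposite.op b • y : dotB B e) : B) = (y : B) * b := fun b y => by
    show MulOpposite.op b • (y : B) = (y : B) * b
    rw [MulOpposite.smul_eq_mul_unop, MulOpposite.unop_op]
  have hθ'zero : ∀ (N : ModuleCat B) (u : Bdot B f) (y : dotB B e),
      θ' N u y 0 = 0 := by
    intro N u y
    have h := hθ'3 N u y 0 0
    rw [add_zero] at h
    exact (left_eq_add.mp h)
  have hθsumφ : ∀ (M : ModuleCat B) (x : Bdot B e) (m : M)
      (s : Finset (Fin (Module.finrank k (Bdot B f))))
      (gφ : Fin (Module.finrank k (Bdot B f)) → ((Bdot B f) →ₗ[k] k)),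
      θ M x (∑ i ∈ s, gφ i) m = ∑ i ∈ s, θ M x (gφ i) m := fun M x m s gφ =>
    map_sum (AddMonoidHom.mk' (fun φ => θ M x φ m) (fun a b' => hθ2 M x a b' m)) gφ s
  have hθ'sum1 : ∀ (N : ModuleCat B) (y : dotB B e) (m : N)
      (s : Finset (Fin (Module.finrank k (Bdot B f))))
      (gu : Fin (Module.finrank k (Bdot B f)) → Bdot B f),
      θ' N (∑ i ∈ s, gu i) y m = ∑ i ∈ s, θ' N (gu i) y m := fun N y m s gu =>
    map_sum (AddMonoidHom.mk' (fun u => θ' N u y m) (fun a b' => hθ'1 N a b' y m)) gu s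
  -- uniqueness of maps into the cogenerator
  have Funiq : ∀ (M : ModuleCat B) (g₁ g₂ : F.obj M →ₗ[B] CMod B),
      (∀ x φ m, g₁ (θ M x φ m) = g₂ (θ M x φ m)) → g₁ = g₂ := by
    intro M g₁ g₂ hag
    obtain ⟨g₀, hg₀, hu⟩ := hθuniv M (CMod B) (fun x φ m => g₁ (θ M x φ m))
      (fun x x' φ m => by simp only [hθ1, map_add])
      (fun x φ φ' m => by simp only [hθ2, map_add])
      (fun x φ m m' => by simp only [hθ3, map_add])
      (fun c x φ m => by simp only [hθk])
      (fun b x φ m => by simp only [hθbal])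
      (fun b x φ m => by simp only [hθleft, map_smul])
    rw [hu g₁ (fun _ _ _ => rfl), hu g₂ (fun x φ m => (hag x φ m).symm)]
  have Guniq : ∀ (N : ModuleCat B) (g₁ g₂ : G.obj N →ₗ[B] CMod B),
      (∀ u y n, g₁ (θ' N u y n) = g₂ (θ' N u y n)) → g₁ = g₂ := by
    intro N g₁ g₂ hag
    obtain ⟨g₀, hg₀, hu⟩ := hθ'univ N (CMod B) (fun u y n => g₁ (θ' N u y n))
      (fun u u' y n => by simp only [hθ'1, map_add])
      (fun u y y' n => by simp only [hθ'2, map_add])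
      (fun u y n n' => by simp only [hθ'3, map_add])
      (fun c u y n => by simp only [hθ'k])
      (fun b u y n => by simp only [hθ'bal])
      (fun b u y n => by simp only [hθ'left, map_smul])
    rw [hu g₁ (fun _ _ _ => rfl), hu g₂ (fun u y n => (hag u y n).symm)]
  -- induction principles
  have Find : ∀ (M : ModuleCat B) (p : F.obj M → Prop),
      (∀ x φ m, p (θ M x φ m)) → p 0 → (∀ a a', p a → p a' → p (a + a')) →
      (∀ (b' : B) a, p a → p (b' • a)) → ∀ z, p z := by
    intro M p hgen h0 hadd hsm z
    have hsp : Submodule.span B {z : F.obj M | ∃ x φ m, θ M x φ m = z} = ⊤ := by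
      refine span_eq_top_of_cmod _ fun g hg => ?_
      exact Funiq M g 0 (fun x φ m => by rw [hg _ ⟨x, φ, m, rfl⟩, LinearMap.zero_apply])
    have hz : z ∈ Submodule.span B {z : F.obj M | ∃ x φ m, θ M x φ m = z} := by
      rw [hsp]; exact Submodule.mem_top
    refine Submodule.span_induction ?_ h0 ?_ ?_ hz
    · rintro z ⟨x, φ, m, rfl⟩; exact hgen x φ m
    · intro a a' _ _ pa pa'; exact hadd a a' pa pa'
    · intro b' a _ pa; exact hsm b' a pa
  have Gind : ∀ (N : ModuleCat B) (p : G.obj N → Prop),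
      (∀ u y n, p (θ' N u y n)) → p 0 → (∀ a a', p a → p a' → p (a + a')) →
      (∀ (b' : B) a, p a → p (b' • a)) → ∀ ξ, p ξ := by
    intro N p hgen h0 hadd hsm ξ
    have hsp : Submodule.span B {z : G.obj N | ∃ u y n, θ' N u y n = z} = ⊤ := by
      refine span_eq_top_of_cmod _ fun g hg => ?_
      exact Guniq N g 0 (fun u y n => by rw [hg _ ⟨u, y, n, rfl⟩, LinearMap.zero_apply])
    have hz : ξ ∈ Submodule.span B {z : G.obj N | ∃ u y n, θ' N u y n = z} := by
      rw [hsp]; exact Submodule.mem_top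
    refine Submodule.span_induction ?_ h0 ?_ ?_ hz
    · rintro z ⟨u, y, n, rfl⟩; exact hgen u y n
    · intro a a' _ _ pa pa'; exact hadd a a' pa pa'
    · intro b' a _ pa; exact hsm b' a pa
  -- the maps Λ
  have hΛex : ∀ (N : ModuleCat B) (h : N →ₗ[B] CMod B),
      ∃ Λ : G.obj N →ₗ[B] Twist k B e f (CMod B),
        ∀ u y n, Λ (θ' N u y n) = twistOf h u y n := by
    intro N h
    refine (hθ'univ N (Twist k B e f (CMod B)) (fun u y n => twistOf h u y n)
      ?_ ?_ ?_ ?_ ?_ ?_).exists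
    · intro u u' y n
      refine Twist.ext fun φ x => ?_
      simp only [Twist.add_apply, twistOf_apply, map_add, add_mul, add_smul]
    · intro u y y' n
      refine Twist.ext fun φ x => ?_
      simp only [Twist.add_apply, twistOf_apply, Submodule.coe_add, mul_add, add_smul,
        map_add]
    · intro u y n n'
      refine Twist.ext fun φ x => ?_
      simp only [Twist.add_apply, twistOf_apply, smul_add, map_add]
    · intro c u y n
      refine Twist.ext fun φ x => ?_
      beta_reduce
      rw [twistOf_apply, twistOf_apply]
      congr 2
      rw [map_smul, smul_eq_mul, map_mul, Submodule.coe_smul_of_tower, Algebra.smul_def,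
        hcentral, hcentral, mul_assoc]
    · intro b u y n
      refine Twist.ext fun φ x => ?_
      beta_reduce
      rw [twistOf_apply, twistOf_apply, hop, smul_smul]
      congr 2
      simp only [mul_assoc]
    · intro b u y n
      exact Twist.ext fun φ x => rfl
  choose Λ hΛ using hΛex
  -- pointwise facts about Λ, by generation
  have hΛk : ∀ (N : ModuleCat B) (h : N →ₗ[B] CMod B) (ξ : G.obj N) (c : k)
      (φ : (Bdot B f) →ₗ[k] k) (x : Bdot B e),
      Λ N h ξ φ (c • x) = Λ N h ξ (c • φ) x := by
    intro N h
    refine Gind N (fun ξ => ∀ (c : k) φ x, Λ N h ξ φ (c • x) = Λ N h ξ (c • φ) x)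
      ?_ ?_ ?_ ?_
    · intro u y n c φ x
      rw [hΛ, twistOf_apply, twistOf_apply]
      congr 2
      rw [LinearMap.smul_apply, smul_eq_mul, map_mul, Submodule.coe_smul_of_tower,
        Algebra.smul_def, mul_assoc, hcentral, mul_assoc]
    · intro c φ x
      rw [map_zero]
      rfl
    · intro a a' pa pa' c φ x
      rw [map_add, Twist.add_apply, Twist.add_apply, pa c φ x, pa' c φ x]
    · intro b' a pa c φ x
      rw [map_smul (Λ N h) b' a, Twist.smul_apply, Twist.smul_apply, pa c _ x,
        LinearMap.smul_comp]
  have hΛB : ∀ (N : ModuleCat B) (h : N →ₗ[B] CMod B) (ξ : G.obj N) (b' : B)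
      (φ : (Bdot B f) →ₗ[k] k) (x : Bdot B e),
      Λ N h ξ φ (b' • x) = b' • (Λ N h ξ φ x) := by
    intro N h
    refine Gind N (fun ξ => ∀ (b' : B) φ x, Λ N h ξ φ (b' • x) = b' • (Λ N h ξ φ x))
      ?_ ?_ ?_ ?_
    · intro u y n b' φ x
      rw [hΛ, twistOf_apply, twistOf_apply, ← map_smul h, smul_smul]
      congr 2
      rw [SetLike.val_smul, smul_eq_mul, mul_assoc, hcentral]
    · intro b' φ x
      rw [map_zero, Twist.zero_apply, Twist.zero_apply, smul_zero]
    · intro a a' pa pa' b' φ x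
      rw [map_add, Twist.add_apply, Twist.add_apply, pa, pa', smul_add]
    · intro b'' a pa b' φ x
      rw [map_smul (Λ N h) b'' a, Twist.smul_apply, Twist.smul_apply, pa]
  -- existence of pointwise values in N
  have hval : ∀ (N : ModuleCat B) (ξ : G.obj N),
      ∃ w : ((Bdot B f) →ₗ[k] k) → (Bdot B e) → N,
        ∀ (h : N →ₗ[B] CMod B) φ x, h (w φ x) = Λ N h ξ φ x := by
    intro N
    refine Gind N _ ?_ ?_ ?_ ?_
    · intro u y n
      refine ⟨fun φ x => (algebraMap k B (φ u) * ((x : B) * (y : B))) • n,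
        fun h φ x => ?_⟩
      rw [hΛ, twistOf_apply]
    · exact ⟨fun _ _ => 0, fun h φ x => by simp only [map_zero, Twist.zero_apply]⟩
    · rintro a a' ⟨w₁, hw₁⟩ ⟨w₂, hw₂⟩
      refine ⟨fun φ x => w₁ φ x + w₂ φ x, fun h φ x => ?_⟩
      rw [map_add, hw₁, hw₂, map_add, Twist.add_apply]
    · rintro b' a ⟨w, hw⟩
      refine ⟨fun φ x => w (φ ∘ₗ smulMap f b') x, fun h φ x => ?_⟩
      rw [hw, map_smul, Twist.smul_apply]
  -- the forward map Φ of the adjunction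
  have hΦex : ∀ (M : ModuleCat B) (N : ModuleCat B) (g : F.obj M →ₗ[B] N),
      ∃ Ψ : M →ₗ[B] G.obj N,
        ∀ m, Ψ m = ∑ i, θ' N (v i) eR (g (θ M eE (v.coord i) m)) := by
    intro M N g
    have Tb : ∀ (m : M) (c : k) (u : Bdot B f) (φ : (Bdot B f) →ₗ[k] k),
        θ' N (c • u) eR (g (θ M eE φ m)) = θ' N u eR (g (θ M eE (c • φ) m)) := by
      intro m c u φ
      rw [hθ'k, hkdot, hθ'bal, ← map_smul g, ← hθleft, ← hksm, hθk]
    refine ⟨⟨⟨fun m => ∑ i, θ' N (v i) eR (g (θ M eE (v.coord i) m)), ?_⟩, ?_⟩,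
      fun m => rfl⟩
    · intro m m'
      rw [← Finset.sum_add_distrib]
      refine Finset.sum_congr rfl fun i _ => ?_
      rw [hθ3, map_add, hθ'3]
    · intro b' m
      simp only [RingHom.id_apply]
      calc (∑ i, θ' N (v i) eR (g (θ M eE (v.coord i) (b' • m))))
          = ∑ i, θ' N (v i) eR (g (θ M eE (v.coord i ∘ₗ smulMap f b') m)) :=
            Finset.sum_congr rfl fun i _ => by rw [hθbal]
        _ = ∑ i, θ' N (b' • v i) eR (g (θ M eE (v.coord i) m)) :=
            (sum_swap_basis v (fun u φ => θ' N u eR (g (θ M eE φ m)))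
              (fun a a' φ => hθ'1 N a a' eR _)
              (fun u φ φ' => by simp only [hθ2, map_add, hθ'3])
              (fun c u φ => Tb m c u φ) b').symm
        _ = b' • ∑ i, θ' N (v i) eR (g (θ M eE (v.coord i) m)) := by
            rw [Finset.smul_sum]
            exact Finset.sum_congr rfl fun i _ => hθ'left N b' (v i) eR _
  choose Φ hΦ using hΦex
  -- the key computation
  have key : ∀ (M : ModuleCat B) (N : ModuleCat B) (g : F.obj M →ₗ[B] N)
      (h : N →ₗ[B] CMod B) (x : Bdot B e) (φ : (Bdot B f) →ₗ[k] k) (m : M),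
      h (g (θ M x φ m)) = Λ N h (Φ M N g m) φ x := by
    intro M N g h x φ m
    have hterm : ∀ i, Λ N h (θ' N (v i) eR (g (θ M eE (v.coord i) m))) φ x
        = h (g (θ M x ((φ (v i)) • v.coord i) m)) := by
      intro i
      rw [hΛ, twistOf_apply]
      have hsub : (algebraMap k B (φ (v i)) * (x : B)) • eE = (φ (v i)) • x := by
        refine Subtype.ext ?_
        show (algebraMap k B (φ (v i)) * (x : B)) * e = (φ (v i)) • (x : B)
        rw [mul_assoc, hBe x, ← Algebra.smul_def]
      rw [heRval, hBe x, ← map_smul g, ← hθleft, hsub, hθk]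
    calc h (g (θ M x φ m))
        = h (g (θ M x (∑ i, (φ (v i)) • v.coord i) m)) := by rw [dual_sum v φ]
      _ = ∑ i, h (g (θ M x ((φ (v i)) • v.coord i) m)) := by
          rw [hθsumφ, map_sum g, map_sum h]
      _ = ∑ i, Λ N h (θ' N (v i) eR (g (θ M eE (v.coord i) m))) φ x :=
          Finset.sum_congr rfl fun i _ => (hterm i).symm
      _ = Λ N h (Φ M N g m) φ x := by
          rw [hΦ, map_sum (Λ N h), Twist.sum_apply]
  -- the reconstruction identity
  have claimP : ∀ (N : ModuleCat B) (ξ : G.obj N)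
      (w : ((Bdot B f) →ₗ[k] k) → (Bdot B e) → N),
      (∀ (h : N →ₗ[B] CMod B) φ x, h (w φ x) = Λ N h ξ φ x) →
      (∑ i, θ' N (v i) eR (w (v.coord i) eE)) = ξ := by
    intro N
    refine Gind N (fun ξ => ∀ w : ((Bdot B f) →ₗ[k] k) → (Bdot B e) → N,
      (∀ (h : N →ₗ[B] CMod B) φ x, h (w φ x) = Λ N h ξ φ x) →
      (∑ i, θ' N (v i) eR (w (v.coord i) eE)) = ξ) ?_ ?_ ?_ ?_
    · intro u y n w hw
      have hwv : ∀ φ x, w φ x = (algebraMap k B (φ u) * ((x : B) * (y : B))) • n :=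
        fun φ x => CMod.eq_of_forall fun h => by rw [hw h φ x, hΛ, twistOf_apply]
      have hterm : ∀ i, θ' N (v i) eR (w (v.coord i) eE)
          = θ' N ((v.coord i u) • v i) y n := by
        intro i
        rw [hwv]
        have h1 : algebraMap k B (v.coord i u) * ((eE : B) * (y : B))
            = algebraMap k B (v.coord i u) * (y : B) := by
          rw [heEval, heB y]
        rw [h1, ← hθ'bal]
        have h3 : (MulOpposite.op (algebraMap k B (v.coord i u) * (y : B))) • eR
            = (v.coord i u) • y := by
          refine Subtype.ext ?_
          rw [hop, heRval, hcentral, heB y, Submodule.coe_smul_of_tower,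
            ← Algebra.smul_def]
        rw [h3, ← hθ'k]
      have h4 : (∑ i, (v.coord i u) • v i) = u := by
        simpa [Module.Basis.coord_apply] using v.sum_repr u
      rw [Finset.sum_congr rfl fun i _ => hterm i, ← hθ'sum1, h4]
    · intro w hw
      have hw0 : ∀ φ x, w φ x = 0 := fun φ x => CMod.eq_of_forall fun h => by
        rw [hw h φ x, map_zero (Λ N h), Twist.zero_apply, map_zero h]
      calc (∑ i, θ' N (v i) eR (w (v.coord i) eE))
          = ∑ _i : Fin (Module.finrank k (Bdot B f)), (0 : G.obj N) :=
            Finset.sum_congr rfl fun i _ => by rw [hw0, hθ'zero]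
        _ = 0 := Finset.sum_const_zero
    · intro a a' pa pa' w hw
      obtain ⟨w₁, hw₁⟩ := hval N a
      obtain ⟨w₂, hw₂⟩ := hval N a'
      have hsplit : ∀ φ x, w φ x = w₁ φ x + w₂ φ x := fun φ x =>
        CMod.eq_of_forall fun h => by
          rw [hw h φ x, map_add (Λ N h), Twist.add_apply, map_add h, hw₁ h φ x,
            hw₂ h φ x]
      calc (∑ i, θ' N (v i) eR (w (v.coord i) eE))
          = ∑ i, (θ' N (v i) eR (w₁ (v.coord i) eE) + θ' N (v i) eR (w₂ (v.coord i) eE)) :=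
            Finset.sum_congr rfl fun i _ => by rw [hsplit, hθ'3]
        _ = (∑ i, θ' N (v i) eR (w₁ (v.coord i) eE))
            + ∑ i, θ' N (v i) eR (w₂ (v.coord i) eE) := Finset.sum_add_distrib
        _ = a + a' := by rw [pa w₁ hw₁, pa' w₂ hw₂]
    · intro b' a pa w hw
      obtain ⟨w', hw'⟩ := hval N a
      have hsplit : ∀ φ x, w φ x = w' (φ ∘ₗ smulMap f b') x := fun φ x =>
        CMod.eq_of_forall fun h => by
          rw [hw h φ x, map_smul (Λ N h), Twist.smul_apply, hw' h _ x]
      have hw'add : ∀ (φ φ' : (Bdot B f) →ₗ[k] k) x,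
          w' (φ + φ') x = w' φ x + w' φ' x := fun φ φ' x =>
        CMod.eq_of_forall fun h => by
          rw [hw' h _ x, map_add (Λ N h a), AddMonoidHom.add_apply, map_add h,
            hw' h φ x, hw' h φ' x]
      have hw'k : ∀ (c : k) φ, w' (c • φ) eE = algebraMap k B c • w' φ eE := fun c φ =>
        CMod.eq_of_forall fun h => by
          rw [hw' h _ eE, ← hΛk N h a c φ eE, hksm, hΛB, map_smul h, hw' h φ eE]
      calc (∑ i, θ' N (v i) eR (w (v.coord i) eE))
          = ∑ i, θ' N (v i) eR (w' (v.coord i ∘ₗ smulMap f b') eE) :=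
            Finset.sum_congr rfl fun i _ => by rw [hsplit]
        _ = ∑ i, θ' N (b' • v i) eR (w' (v.coord i) eE) :=
            (sum_swap_basis v (fun u φ => θ' N u eR (w' φ eE))
              (fun u u' φ => hθ'1 N u u' eR _)
              (fun u φ φ' => by simp only [hw'add, hθ'3])
              (fun c u φ => by simp only [hθ'k, hkdot, hθ'bal, hw'k]) b').symm
        _ = b' • ∑ i, θ' N (v i) eR (w' (v.coord i) eE) := by
            rw [Finset.smul_sum]
            exact Finset.sum_congr rfl fun i _ => hθ'left N b' (v i) eR _
        _ = b' • a := by rw [pa w' hw']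
  -- injectivity of Φ
  have inj : ∀ (M : ModuleCat B) (N : ModuleCat B) (g g' : F.obj M →ₗ[B] N),
      Φ M N g = Φ M N g' → g = g' := by
    intro M N g g' hgg
    refine LinearMap.ext fun z => CMod.eq_of_forall (B := B) fun h => ?_
    have heq := Funiq M (h ∘ₗ g) (h ∘ₗ g') (fun x φ m => by
      rw [LinearMap.comp_apply, LinearMap.comp_apply, key M N g h x φ m,
        key M N g' h x φ m, hgg])
    exact congrArg (fun (t : F.obj M →ₗ[B] CMod B) => t z) heq
  -- surjectivity of Φ
  have surj : ∀ (M : ModuleCat B) (N : ModuleCat B) (ψ : M →ₗ[B] G.obj N),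
      ∃ g : F.obj M →ₗ[B] N, Φ M N g = ψ := by
    intro M N ψ
    have hghex : ∀ h : N →ₗ[B] CMod B, ∃ gh : F.obj M →ₗ[B] CMod B,
        ∀ x φ m, gh (θ M x φ m) = Λ N h (ψ m) φ x := fun h =>
      (hθuniv M (CMod B) (fun x φ m => Λ N h (ψ m) φ x)
        (fun x x' φ m => map_add (Λ N h (ψ m) φ) x x')
        (fun x φ φ' m => by simp only [map_add (Λ N h (ψ m)) φ φ', AddMonoidHom.add_apply])
        (fun x φ m m' => by simp only [map_add ψ, map_add (Λ N h), Twist.add_apply])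
        (fun c x φ m => hΛk N h (ψ m) c φ x)
        (fun b x φ m => by simp only [map_smul ψ, map_smul (Λ N h), Twist.smul_apply])
        (fun b x φ m => hΛB N h (ψ m) b φ x)).exists
    choose gh hgh using hghex
    have hgex : ∀ z : F.obj M, ∃ w : N, ∀ h, h w = gh h z := by
      refine Find M (fun z => ∃ w : N, ∀ h, h w = gh h z) ?_ ?_ ?_ ?_
      · intro x φ m
        obtain ⟨w, hw⟩ := hval N (ψ m)
        exact ⟨w φ x, fun h => by rw [hw h φ x, ← hgh h x φ m]⟩
      · exact ⟨0, fun h => by rw [map_zero, map_zero]⟩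
      · rintro a a' ⟨w₁, hw₁⟩ ⟨w₂, hw₂⟩
        exact ⟨w₁ + w₂, fun h => by rw [map_add, map_add, hw₁, hw₂]⟩
      · rintro b' a ⟨w, hw⟩
        exact ⟨b' • w, fun h => by rw [map_smul, map_smul, hw]⟩
    choose gf hgf using hgex
    have hgadd : ∀ z z', gf (z + z') = gf z + gf z' := fun z z' =>
      CMod.eq_of_forall fun h => by rw [hgf, map_add, map_add, hgf, hgf]
    have hgsm : ∀ (b' : B) z, gf (b' • z) = b' • gf z := fun b' z =>
      CMod.eq_of_forall fun h => by rw [hgf, map_smul, map_smul, hgf]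
    refine ⟨⟨⟨gf, hgadd⟩, hgsm⟩, ?_⟩
    refine LinearMap.ext fun m => ?_
    rw [hΦ]
    refine claimP N (ψ m)
      (fun φ x => (⟨⟨gf, hgadd⟩, hgsm⟩ : F.obj M →ₗ[B] N) (θ M x φ m)) (fun h φ x => ?_)
    show h (gf (θ M x φ m)) = _
    rw [hgf, hgh]
  -- assembling the adjunction
  let heq : ∀ (M : ModuleCat B) (N : ModuleCat B), (F.obj M ⟶ N) ≃ (M ⟶ G.obj N) :=
    fun M N => Equiv.ofBijective (fun g => ModuleCat.ofHom (Φ M N g.hom))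
      ⟨fun g g' hgg => ModuleCat.hom_ext (inj M N g.hom g'.hom (congrArg ModuleCat.Hom.hom hgg)),
        fun ψ => by
          obtain ⟨g, hg⟩ := surj M N ψ.hom
          exact ⟨ModuleCat.ofHom g, ModuleCat.hom_ext hg⟩⟩
  refine ⟨Adjunction.mkOfHomEquiv
    { homEquiv := heq
      homEquiv_naturality_left_symm := ?_
      homEquiv_naturality_right := ?_ }⟩
  · intro X' X Y ρ ψ
    apply ModuleCat.hom_ext
    refine inj X' Y _ _ ?_
    have h1 : Φ X' Y ((heq X' Y).symm (ρ ≫ ψ)).hom = (ρ ≫ ψ).hom :=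
      congrArg ModuleCat.Hom.hom ((heq X' Y).apply_symm_apply (ρ ≫ ψ))
    have h2 : Φ X Y ((heq X Y).symm ψ).hom = ψ.hom :=
      congrArg ModuleCat.Hom.hom ((heq X Y).apply_symm_apply ψ)
    rw [h1]
    refine LinearMap.ext fun m => ?_
    rw [hΦ]
    have h3 : ∀ i, (F.map ρ ≫ ((heq X Y).symm ψ)).hom (θ X' eE (v.coord i) m)
        = ((heq X Y).symm ψ).hom (θ X eE (v.coord i) (ρ.hom m)) := fun i =>
      congrArg ((heq X Y).symm ψ).hom (hθnat X' X ρ eE (v.coord i) m)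
    calc (ρ ≫ ψ).hom m = ψ.hom (ρ.hom m) := rfl
      _ = Φ X Y ((heq X Y).symm ψ).hom (ρ.hom m) := by rw [h2]
      _ = ∑ i, θ' Y (v i) eR (((heq X Y).symm ψ).hom (θ X eE (v.coord i) (ρ.hom m))) := by
          rw [hΦ]
      _ = ∑ i, θ' Y (v i) eR ((F.map ρ ≫ ((heq X Y).symm ψ)).hom (θ X' eE (v.coord i) m)) :=
          Finset.sum_congr rfl fun i _ => by rw [h3]
  · intro X Y Y' g n
    apply ModuleCat.hom_ext
    refine LinearMap.ext fun m => ?_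
    show Φ X Y' (g ≫ n).hom m = (G.map n).hom (Φ X Y g.hom m)
    rw [hΦ, hΦ, map_sum (G.map n).hom]
    refine Finset.sum_congr rfl fun i _ => ?_
    exact (hθ'nat Y Y' n (v i) eR _).symm
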